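/- arXiv:1601.01342 — 2 statements merged into one kernel-verified Lean document; each statement's English description precedes it below -/
import Mathlib

section
/- Let V be a finite rooted tree (as in the context) with depth function d and height H. Let ε₀ ∈ [0, 1), let s : V → ℝ satisfy s k ≥ 0 for all k, and let S : V → ℝ satisfy, for every j ≠ r, (1 − ε₀)·S j ≤ (∑_{k ∈ ch(j)} S k) + s j. Then for every j ≠ r, S j ≤ (∑_{k ∈ Λ(j)} s k) / (1 − ε₀)^(H − d(j) + 1). -/
/-- A finite rooted tree: a distinguished root and a parent map under which
every node reaches the root, the root is its own parent, and no other node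
is its own parent. -/
structure FiniteRootedTree (V : Type*) where
  root : V
  parent : V → V
  parent_root : parent root = root
  parent_ne : ∀ v, v ≠ root → parent v ≠ v
  reaches_root : ∀ v, ∃ n : ℕ, parent^[n] v = root

namespace FiniteRootedTree

variable {V : Type*} [Fintype V] [DecidableEq V]

/-- The children of a node `j`. -/
def children (T : FiniteRootedTree V) (j : V) : Finset V :=
  Finset.univ.filter fun k => k ≠ T.root ∧ T.parent k = j

open Classical in
/-- The subtree `Λ(j)` rooted at `j` (the descendants of `j`, including `j`). -/
noncomputable def subtree (T : FiniteRootedTree V) (j : V) : Finset V :=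
  Finset.univ.filter fun k => ∃ n : ℕ, T.parent^[n] k = j

open Classical in
/-- The path set `P(j)`: the ancestors of `j`, excluding the root and
including `j` itself. -/
noncomputable def pathSet (T : FiniteRootedTree V) (j : V) : Finset V :=
  Finset.univ.filter fun k => k ≠ T.root ∧ ∃ n : ℕ, T.parent^[n] j = k

/-- The depth `d(j)`: the least `n` with `parent^[n] j = root`. -/
noncomputable def depth (T : FiniteRootedTree V) (j : V) : ℕ :=
  Nat.find (T.reaches_root j)

/-- The height `H` of the tree: the maximum depth over all nodes. -/
noncomputable def height (T : FiniteRootedTree V) : ℕ :=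
  Finset.univ.sup fun v => T.depth v



variable {V : Type*} [Fintype V] [DecidableEq V] (T : FiniteRootedTree V)

lemma depth_spec (v : V) : T.parent^[T.depth v] v = T.root :=
  Nat.find_spec (T.reaches_root v)

lemma depth_le {v : V} {n : ℕ} (h : T.parent^[n] v = T.root) : T.depth v ≤ n :=
  Nat.find_le h

lemma depth_parent_add_one {v : V} (hv : v ≠ T.root) :
    T.depth (T.parent v) + 1 = T.depth v := by
  have hpos : T.depth v ≠ 0 := by
    intro h
    have := T.depth_spec v
    rw [h] at this
    exact hv this
  have h1 : T.depth (T.parent v) ≤ T.depth v - 1 := by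
    apply T.depth_le
    have := T.depth_spec v
    rwa [← Nat.succ_pred_eq_of_pos (Nat.pos_of_ne_zero hpos),
      Function.iterate_succ_apply] at this
  have h2 : T.depth v ≤ T.depth (T.parent v) + 1 := by
    apply T.depth_le
    rw [Function.iterate_succ_apply]
    exact T.depth_spec (T.parent v)
  omega

lemma depth_iterate {n : ℕ} {x : V} (h : T.parent^[n] x ≠ T.root) :
    T.depth (T.parent^[n] x) + n = T.depth x := by
  induction n with
  | zero => simp
  | succ n ih =>
    rw [Function.iterate_succ_apply'] at h ⊢
    have hy : T.parent^[n] x ≠ T.root := by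
      intro he; rw [he, T.parent_root] at h; exact h rfl
    have := T.depth_parent_add_one hy
    have := ih hy
    omega

lemma mem_children {j k : V} : k ∈ T.children j ↔ k ≠ T.root ∧ T.parent k = j := by
  simp [children]

lemma mem_subtree {j v : V} : v ∈ T.subtree j ↔ ∃ n : ℕ, T.parent^[n] v = j := by
  simp [subtree]

lemma self_mem_subtree (j : V) : j ∈ T.subtree j :=
  T.mem_subtree.2 ⟨0, rfl⟩

lemma depth_child {j k : V} (hk : k ∈ T.children j) :
    T.depth k = T.depth j + 1 := by
  obtain ⟨h1, h2⟩ := T.mem_children.1 hk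
  have := T.depth_parent_add_one h1
  rw [h2] at this
  omega

lemma subtree_subset {j k : V} (hk : k ∈ T.children j) :
    T.subtree k ⊆ T.subtree j := by
  intro v hv
  obtain ⟨n, hn⟩ := T.mem_subtree.1 hv
  obtain ⟨_, h2⟩ := T.mem_children.1 hk
  exact T.mem_subtree.2 ⟨n + 1, by rw [Function.iterate_succ_apply', hn, h2]⟩

lemma subtree_disjoint {j k₁ k₂ : V} (h₁ : k₁ ∈ T.children j)
    (h₂ : k₂ ∈ T.children j) (hne : k₁ ≠ k₂) :
    Disjoint (T.subtree k₁) (T.subtree k₂) := by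
  rw [Finset.disjoint_left]
  intro v hv1 hv2
  obtain ⟨a, ha⟩ := T.mem_subtree.1 hv1
  obtain ⟨b, hb⟩ := T.mem_subtree.1 hv2
  have hk1 : k₁ ≠ T.root := (T.mem_children.1 h₁).1
  have hk2 : k₂ ≠ T.root := (T.mem_children.1 h₂).1
  have da : T.depth k₁ + a = T.depth v := by
    have := T.depth_iterate (n := a) (x := v) (by rw [ha]; exact hk1)
    rwa [ha] at this
  have db : T.depth k₂ + b = T.depth v := by
    have := T.depth_iterate (n := b) (x := v) (by rw [hb]; exact hk2)
    rwa [hb] at this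
  have : a = b := by
    have := T.depth_child h₁
    have := T.depth_child h₂
    omega
  exact hne (by rw [← ha, ← hb, this])

lemma not_mem_biUnion_subtree {j : V} (hj : j ≠ T.root) :
    j ∉ (T.children j).biUnion (T.subtree) := by
  intro h
  obtain ⟨k, hk, hjk⟩ := Finset.mem_biUnion.1 h
  obtain ⟨n, hn⟩ := T.mem_subtree.1 hjk
  have hk' : k ≠ T.root := (T.mem_children.1 hk).1
  have : T.depth k + n = T.depth j := by
    have := T.depth_iterate (n := n) (x := j) (by rw [hn]; exact hk')
    rwa [hn] at this
  have := T.depth_child hk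
  omega

lemma depth_le_height (v : V) : T.depth v ≤ T.height :=
  Finset.le_sup (Finset.mem_univ v)

end FiniteRootedTree

open FiniteRootedTree

/-- Lemma 2 (componentwise): under the small line losses assumption
`(1−ε₀)·S j ≤ (∑_{k ∈ ch(j)} S k) + s j` with nonnegative injections `s`,
the flow `S j` is bounded above by the LPF flow `∑_{k ∈ Λ(j)} s k` divided by
`(1−ε₀)^(H − d(j) + 1)`. -/
theorem npf_flow_upper_bound {V : Type*} [Fintype V] [DecidableEq V]
    (T : FiniteRootedTree V) (ε₀ : ℝ) (hε₀ : 0 ≤ ε₀) (hε₁ : ε₀ < 1)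
    (s : V → ℝ) (hs : ∀ k, 0 ≤ s k)
    (S : V → ℝ)
    (hS : ∀ j, j ≠ T.root → (1 - ε₀) * S j ≤ (∑ k ∈ T.children j, S k) + s j) :
    ∀ j, j ≠ T.root →
      S j ≤ (∑ k ∈ T.subtree j, s k) / (1 - ε₀) ^ (T.height - T.depth j + 1) := by

  have hc : (0:ℝ) < 1 - ε₀ := by linarith
  have key : ∀ j, j ≠ T.root →
      (∀ k ∈ T.children j,
        S k ≤ (∑ x ∈ T.subtree k, s x) / (1 - ε₀) ^ (T.height - T.depth j)) →
      S j ≤ (∑ k ∈ T.subtree j, s k) / (1 - ε₀) ^ (T.height - T.depth j + 1) := by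
    intro j hj hch
    set e := T.height - T.depth j with he
    have hpow : (0:ℝ) < (1 - ε₀) ^ e := pow_pos hc e
    have hc1 : (1 - ε₀) ^ e ≤ 1 := pow_le_one₀ (by linarith) (by linarith)
    set A := (T.children j).biUnion (T.subtree) with hA
    have hdisj : (T.children j : Set V).PairwiseDisjoint (T.subtree) := by
      intro k₁ h₁ k₂ h₂ hne
      exact T.subtree_disjoint h₁ h₂ hne
    have h3 : ∑ x ∈ A, s x = ∑ k ∈ T.children j, ∑ x ∈ T.subtree k, s x :=
      Finset.sum_biUnion hdisj
    have hjA : j ∉ A := T.not_mem_biUnion_subtree hj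
    have hins : insert j A ⊆ T.subtree j := by
      intro v hv
      rcases Finset.mem_insert.1 hv with rfl | hv
      · exact T.self_mem_subtree v
      · obtain ⟨k, hk, hvk⟩ := Finset.mem_biUnion.1 hv
        exact T.subtree_subset hk hvk
    have hB : (∑ k ∈ T.children j, ∑ x ∈ T.subtree k, s x) + s j
        ≤ ∑ x ∈ T.subtree j, s x := by
      have := Finset.sum_le_sum_of_subset_of_nonneg hins
        (fun i _ _ => hs i)
      rw [Finset.sum_insert hjA] at this
      linarith [h3]
    have h2 : ∑ k ∈ T.children j, S k
        ≤ (∑ k ∈ T.children j, ∑ x ∈ T.subtree k, s x) / (1 - ε₀) ^ e := by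
      rw [Finset.sum_div]
      exact Finset.sum_le_sum hch
    have hsj : s j ≤ s j / (1 - ε₀) ^ e := by
      rw [le_div_iff₀ hpow]
      calc s j * (1 - ε₀) ^ e ≤ s j * 1 :=
            mul_le_mul_of_nonneg_left hc1 (hs j)
        _ = s j := mul_one _
    have h1 := hS j hj
    rw [pow_succ, ← div_div, le_div_iff₀ hc, mul_comm]
    calc (1 - ε₀) * S j
        ≤ (∑ k ∈ T.children j, S k) + s j := h1
      _ ≤ (∑ k ∈ T.children j, ∑ x ∈ T.subtree k, s x) / (1 - ε₀) ^ e
            + s j / (1 - ε₀) ^ e := by linarith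
      _ = ((∑ k ∈ T.children j, ∑ x ∈ T.subtree k, s x) + s j) / (1 - ε₀) ^ e :=
            (add_div _ _ _).symm
      _ ≤ (∑ x ∈ T.subtree j, s x) / (1 - ε₀) ^ e :=
            (div_le_div_iff_of_pos_right hpow).2 hB
  suffices h : ∀ m : ℕ, ∀ j, j ≠ T.root → T.height - T.depth j ≤ m →
      S j ≤ (∑ k ∈ T.subtree j, s k) / (1 - ε₀) ^ (T.height - T.depth j + 1) by
    intro j hj
    exact h (T.height - T.depth j) j hj le_rfl
  intro m
  induction m with
  | zero =>
    intro j hj hm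
    apply key j hj
    intro k hk
    exfalso
    have h1 := T.depth_child hk
    have h2 := T.depth_le_height k
    omega
  | succ m ih =>
    intro j hj hm
    apply key j hj
    intro k hk
    have hkr : k ≠ T.root := (T.mem_children.1 hk).1
    have h1 := T.depth_child hk
    have h2 := T.depth_le_height k
    have hle : T.height - T.depth k ≤ m := by omega
    have := ih k hkr hle
    have hexp : T.height - T.depth k + 1 = T.height - T.depth j := by omega
    rwa [hexp] at this
end

section
/- Let V be a finite rooted tree (as in the context), z : V → ℂ, ν₀ ∈ ℝ, Ŝ : V → ℂ, and let ν̂ : V → ℝ satisfy ν̂ r = ν₀ and ν̂ j = ν̂(p j) − 2·Re(conj(z j)·Ŝ j) for every j ≠ r. Then: (i) for every j ∈ V, ν̂ j = ν₀ − 2·∑_{k ∈ P(j)} Re(conj(z k)·Ŝ k); and (ii) if in addition Re(z k) ≥ 0, Im(z k) ≥ 0, Re(Ŝ k) ≥ 0, and Im(Ŝ k) ≥ 0 for every k ≠ r, then ν̂ j ≤ ν₀ for every j ∈ V. -/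
open FiniteRootedTree

namespace FiniteRootedTree

variable {V : Type*} [Fintype V] [DecidableEq V]

lemma iterate_root (T : FiniteRootedTree V) (n : ℕ) : T.parent^[n] T.root = T.root := by
  induction n with
  | zero => rfl
  | succ n ih => rw [Function.iterate_succ_apply', ih, T.parent_root]

lemma pathSet_root (T : FiniteRootedTree V) : T.pathSet T.root = ∅ := by
  ext k
  simp only [pathSet, Finset.mem_filter, Finset.mem_univ, true_and, Finset.notMem_empty,
    iff_false]
  rintro ⟨hk, n, hn⟩
  exact hk (by rw [T.iterate_root n] at hn; exact hn.symm)

lemma no_cycle (T : FiniteRootedTree V) (j : V) (hj : j ≠ T.root) (c : ℕ) (hc : 0 < c)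
    (hcyc : T.parent^[c] j = j) : False := by
  obtain ⟨m, hm⟩ := T.reaches_root j
  have key : ∀ t, T.parent^[c * t] j = j := by
    intro t
    induction t with
    | zero => rfl
    | succ t ih => rw [Nat.mul_succ, Function.iterate_add_apply, hcyc, ih]
  have hle : m ≤ c * m := Nat.le_mul_of_pos_left m hc
  have : T.parent^[c * m] j = T.root := by
    rw [← Nat.sub_add_cancel hle, Function.iterate_add_apply, hm, T.iterate_root]
  exact hj ((key m).symm.trans this)

lemma depth_parent_lt (T : FiniteRootedTree V) (j : V) (hj : j ≠ T.root) :
    T.depth (T.parent j) < T.depth j := by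
  have hd : T.parent^[T.depth j] j = T.root := Nat.find_spec (T.reaches_root j)
  have hpos : 0 < T.depth j := by
    rcases Nat.eq_zero_or_pos (T.depth j) with h | h
    · rw [h] at hd; exact absurd hd hj
    · exact h
  have : T.parent^[T.depth j - 1] (T.parent j) = T.root := by
    rw [← Function.iterate_succ_apply, Nat.succ_eq_add_one, Nat.sub_add_cancel hpos]
    exact hd
  calc T.depth (T.parent j) ≤ T.depth j - 1 := Nat.find_le this
    _ < T.depth j := Nat.sub_lt hpos one_pos

lemma pathSet_ne_root (T : FiniteRootedTree V) (j : V) (hj : j ≠ T.root) :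
    T.pathSet j = insert j (T.pathSet (T.parent j)) := by
  ext k
  simp only [pathSet, Finset.mem_filter, Finset.mem_univ, true_and, Finset.mem_insert]
  constructor
  · rintro ⟨hk, n, hn⟩
    rcases n with _ | n
    · left; exact hn.symm
    · right; exact ⟨hk, n, by rwa [Function.iterate_succ_apply] at hn⟩
  · rintro (rfl | ⟨hk, n, hn⟩)
    · exact ⟨hj, 0, rfl⟩
    · exact ⟨hk, n + 1, by rwa [Function.iterate_succ_apply]⟩

lemma not_mem_pathSet_parent (T : FiniteRootedTree V) (j : V) (hj : j ≠ T.root) :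
    j ∉ T.pathSet (T.parent j) := by
  simp only [pathSet, Finset.mem_filter, Finset.mem_univ, true_and, not_and]
  rintro _ ⟨n, hn⟩
  exact T.no_cycle j hj (n + 1) (Nat.succ_pos n)
    (by rwa [Function.iterate_succ_apply])

end FiniteRootedTree

/-- Lemma 1 (equation (10e)) and Assumption (A0)₂: (i) under the LPF voltage
recursion, the squared voltage at node `j` telescopes along the path from the
root to `j`: `ν̂ j = ν₀ − 2·∑_{k ∈ P(j)} Re(conj(z k)·Ŝ k)`; (ii) if
moreover all impedances and all line flows have nonnegative real and
imaginary parts (no reverse power flows), then `ν̂ j ≤ ν₀` for every node. -/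
theorem lpf_voltage_telescoping {V : Type*} [Fintype V] [DecidableEq V]
    (T : FiniteRootedTree V) (z : V → ℂ) (ν₀ : ℝ) (Shat : V → ℂ)
    (nuhat : V → ℝ) (hroot : nuhat T.root = ν₀)
    (hrec : ∀ j, j ≠ T.root →
      nuhat j = nuhat (T.parent j) - 2 * ((starRingEnd ℂ) (z j) * Shat j).re) :
    (∀ j, nuhat j =
      ν₀ - 2 * ∑ k ∈ T.pathSet j, ((starRingEnd ℂ) (z k) * Shat k).re) ∧
    ((∀ k, k ≠ T.root →
        0 ≤ (z k).re ∧ 0 ≤ (z k).im ∧ 0 ≤ (Shat k).re ∧ 0 ≤ (Shat k).im) →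
      ∀ j, nuhat j ≤ ν₀) := by
  have key : ∀ n j, T.depth j = n → nuhat j =
      ν₀ - 2 * ∑ k ∈ T.pathSet j, ((starRingEnd ℂ) (z k) * Shat k).re := by
    intro n
    induction n using Nat.strong_induction_on with
    | _ n ih =>
      intro j hn
      by_cases hj : j = T.root
      · subst hj
        rw [hroot, T.pathSet_root, Finset.sum_empty]
        ring
      · rw [hrec j hj, ih (T.depth (T.parent j)) (hn ▸ T.depth_parent_lt j hj)
            (T.parent j) rfl, T.pathSet_ne_root j hj,
            Finset.sum_insert (T.not_mem_pathSet_parent j hj)]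
        ring
  have part1 : ∀ j, nuhat j =
      ν₀ - 2 * ∑ k ∈ T.pathSet j, ((starRingEnd ℂ) (z k) * Shat k).re :=
    fun j => key (T.depth j) j rfl
  refine ⟨part1, fun hpos j => ?_⟩
  rw [part1 j]
  have : 0 ≤ ∑ k ∈ T.pathSet j, ((starRingEnd ℂ) (z k) * Shat k).re := by
    apply Finset.sum_nonneg
    intro k hk
    have hkr : k ≠ T.root := by
      simp only [pathSet, Finset.mem_filter] at hk
      exact hk.2.1
    obtain ⟨h1, h2, h3, h4⟩ := hpos k hkr
    simp only [Complex.mul_re, Complex.conj_re, Complex.conj_im]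
    nlinarith
  linarith
end
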